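/- arXiv:1607.02466 — 10 statements merged into one kernel-verified Lean document; each statement's English description precedes it below -/
import Mathlib

section
/- The feasible set is nonempty (for example, the assignment d i = h + i, where h is an upper bound of all the values m i, is feasible); moreover, for every feasible assignment d one has ∑ i, a i * m i ≤ e(d), and there exists a feasible assignment d* such that e(d*) ≤ e(d) for every feasible assignment d (i.e., the objective e attains a minimum on the feasible set). -/
/-- The feasible set (injective assignments respecting lower bounds) is nonempty,
`∑ i, a i * m i` is a lower bound of the objective on it, and the objective
attains a minimum on it. -/
theorem stmt_0 (n : ℕ) (a m : Fin n → ℤ) (ha : ∀ i, 0 < a i) :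
    (∃ d : Fin n → ℤ, Function.Injective d ∧ ∀ i, m i ≤ d i) ∧
    (∀ d : Fin n → ℤ, Function.Injective d → (∀ i, m i ≤ d i) →
      ∑ i, a i * m i ≤ ∑ i, a i * d i) ∧
    (∃ dstar : Fin n → ℤ, (Function.Injective dstar ∧ ∀ i, m i ≤ dstar i) ∧
      ∀ d : Fin n → ℤ, Function.Injective d → (∀ i, m i ≤ d i) →
        ∑ i, a i * dstar i ≤ ∑ i, a i * d i) := by
  have hfeas : ∃ d : Fin n → ℤ, Function.Injective d ∧ ∀ i, m i ≤ d i := by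
    refine ⟨fun i => (∑ j, |m j|) + i, ?_, ?_⟩
    · intro i j hij
      have : (i : ℤ) = (j : ℤ) := by simpa using hij
      exact Fin.ext (by exact_mod_cast this)
    · intro i
      show m i ≤ (∑ j, |m j|) + (i : ℤ)
      have h1 : m i ≤ |m i| := le_abs_self _
      have h2 : |m i| ≤ ∑ j, |m j| :=
        Finset.single_le_sum (fun j _ => abs_nonneg (m j)) (Finset.mem_univ i)
      have h3 : (0 : ℤ) ≤ (i : ℤ) := by positivity
      linarith
  have hlb : ∀ d : Fin n → ℤ, Function.Injective d → (∀ i, m i ≤ d i) →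
      ∑ i, a i * m i ≤ ∑ i, a i * d i := by
    intro d _ hd
    exact Finset.sum_le_sum fun i _ =>
      mul_le_mul_of_nonneg_left (hd i) (ha i).le
  refine ⟨hfeas, hlb, ?_⟩
  obtain ⟨z, ⟨⟨d0, hd0, hz⟩, hmin⟩⟩ := Int.exists_least_of_bdd
    (P := fun z => ∃ d : Fin n → ℤ, (Function.Injective d ∧ ∀ i, m i ≤ d i) ∧
      ∑ i, a i * d i = z)
    ⟨∑ i, a i * m i, fun z ⟨d, ⟨hinj, hge⟩, hz⟩ => hz ▸ hlb d hinj hge⟩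
    (by obtain ⟨d, hinj, hge⟩ := hfeas; exact ⟨_, d, ⟨hinj, hge⟩, rfl⟩)
  exact ⟨d0, hd0, fun d hinj hge => hz ▸ hmin _ ⟨d, ⟨hinj, hge⟩, rfl⟩⟩
end

section
/- Exchange property of minimizers: if d* is a minimizer, i and j are distinct indices with a j < a i, and m i ≤ d* j, then d* i < d* j (in a minimizing assignment, among two variables that are both eligible for the smaller of their two values, the variable with the greater coefficient must receive the smaller value). -/
/-- Exchange property of minimizers: if `a j < a i` and `m i ≤ d* j`, then
`d* i < d* j`. -/
theorem stmt_1 (n : ℕ) (a m : Fin n → ℤ) (ha : ∀ i, 0 < a i)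
    (dstar : Fin n → ℤ)
    (hfeas : Function.Injective dstar ∧ ∀ i, m i ≤ dstar i)
    (hmin : ∀ d : Fin n → ℤ, Function.Injective d → (∀ i, m i ≤ d i) →
      ∑ i, a i * dstar i ≤ ∑ i, a i * d i)
    (i j : Fin n) (hij : i ≠ j) (hcoef : a j < a i) (helig : m i ≤ dstar j) :
    dstar i < dstar j := by
  by_contra hlt
  push_neg at hlt
  have hne : dstar j ≠ dstar i := fun h => hij (hfeas.1 h).symm
  have hjlt : dstar j < dstar i := lt_of_le_of_ne hlt hne
  set d : Fin n → ℤ := dstar ∘ Equiv.swap i j with hd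
  have hdinj : Function.Injective d := hfeas.1.comp (Equiv.swap i j).injective
  have hdi : d i = dstar j := by simp [hd, Equiv.swap_apply_left]
  have hdj : d j = dstar i := by simp [hd, Equiv.swap_apply_right]
  have hdk : ∀ k, k ≠ i → k ≠ j → d k = dstar k := by
    intro k hki hkj
    simp [hd, Equiv.swap_apply_of_ne_of_ne hki hkj]
  have hbound : ∀ k, m k ≤ d k := by
    intro k
    by_cases hki : k = i
    · subst hki; rw [hdi]; exact helig
    · by_cases hkj : k = j
      · subst hkj; rw [hdj]; exact le_trans (hfeas.2 k) hjlt.le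
      · rw [hdk k hki hkj]; exact hfeas.2 k
  have hsum := hmin d hdinj hbound
  have hpair : ({i, j} : Finset (Fin n)).sum (fun k => a k * d k)
      < ({i, j} : Finset (Fin n)).sum (fun k => a k * dstar k) := by
    rw [Finset.sum_pair hij, Finset.sum_pair hij, hdi, hdj]
    nlinarith [sub_pos.mpr hcoef, sub_pos.mpr hjlt]
  have hcompl : ∀ k ∈ ({i, j} : Finset (Fin n))ᶜ, a k * d k = a k * dstar k := by
    intro k hk
    simp only [Finset.mem_compl, Finset.mem_insert, Finset.mem_singleton, not_or] at hk
    rw [hdk k hk.1 hk.2]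
  have htot : ∑ k, a k * d k < ∑ k, a k * dstar k := by
    rw [← Finset.sum_compl_add_sum ({i, j} : Finset (Fin n)) (fun k => a k * d k),
        ← Finset.sum_compl_add_sum ({i, j} : Finset (Fin n)) (fun k => a k * dstar k),
        Finset.sum_congr rfl hcompl]
    exact add_lt_add_of_le_of_lt le_rfl hpair
  omega
end

section
/- No-gap property of minimizers: if d* is a minimizer, then for every index i and every integer v with m i ≤ v < d* i there exists an index j with d* j = v (no variable of a minimizing assignment can be lowered to an unused value above its minimum). -/
/-- No-gap property of minimizers: every value `v` with `m i ≤ v < d* i` is used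
by some variable. -/
theorem stmt_2 (n : ℕ) (a m : Fin n → ℤ) (ha : ∀ i, 0 < a i)
    (dstar : Fin n → ℤ)
    (hfeas : Function.Injective dstar ∧ ∀ i, m i ≤ dstar i)
    (hmin : ∀ d : Fin n → ℤ, Function.Injective d → (∀ i, m i ≤ d i) →
      ∑ i, a i * dstar i ≤ ∑ i, a i * d i) :
    ∀ i : Fin n, ∀ v : ℤ, m i ≤ v → v < dstar i → ∃ j : Fin n, dstar j = v := by
  intro i v hmv hvlt
  by_contra h
  push_neg at h
  set d := Function.update dstar i v with hd
  have hinj : Function.Injective d := by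
    intro x y hxy
    rw [hd] at hxy
    by_cases hx : x = i <;> by_cases hy : y = i
    · exact hx.trans hy.symm
    · subst hx; rw [Function.update_self, Function.update_of_ne hy] at hxy
      exact absurd hxy.symm (h y)
    · subst hy; rw [Function.update_self, Function.update_of_ne hx] at hxy
      exact absurd hxy (h x)
    · rw [Function.update_of_ne hx, Function.update_of_ne hy] at hxy
      exact hfeas.1 hxy
  have hle : ∀ j, m j ≤ d j := by
    intro j
    by_cases hj : j = i
    · subst hj; simpa [hd] using hmv
    · simpa [hd, Function.update_of_ne hj] using hfeas.2 j
  have hsum := hmin d hinj hle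
  have h1 : ∑ j, a j * d j =
      a i * v + ∑ j ∈ Finset.univ.erase i, a j * dstar j := by
    rw [← Finset.add_sum_erase _ _ (Finset.mem_univ i)]
    simp only [hd, Function.update_self]
    congr 1
    exact Finset.sum_congr rfl fun j hj => by
      rw [Function.update_of_ne (Finset.ne_of_mem_erase hj)]
  have h2 : ∑ j, a j * dstar j =
      a i * dstar i + ∑ j ∈ Finset.univ.erase i, a j * dstar j :=
    (Finset.add_sum_erase _ _ (Finset.mem_univ i)).symm
  rw [h1, h2] at hsum
  have hlt : a i * v < a i * dstar i := mul_lt_mul_of_pos_left hvlt (ha i)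
  linarith
end

section
/- Every minimizer uses the lowest eligible value: if n ≥ 1 and d* is a minimizer, then there exists an index i such that d* i equals the minimum of the values m j over all j : Fin n. -/
/-- Every minimizer uses the lowest eligible value: some variable is assigned
the minimum of the lower bounds `m j`. -/
theorem stmt_3 (n : ℕ) (hn : 1 ≤ n) (a m : Fin n → ℤ) (ha : ∀ i, 0 < a i)
    (dstar : Fin n → ℤ)
    (hfeas : Function.Injective dstar ∧ ∀ i, m i ≤ dstar i)
    (hmin : ∀ d : Fin n → ℤ, Function.Injective d → (∀ i, m i ≤ d i) →
      ∑ i, a i * dstar i ≤ ∑ i, a i * d i) :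
    ∃ i : Fin n, dstar i = Finset.univ.inf' ⟨⟨0, hn⟩, Finset.mem_univ _⟩ m := by
  by_contra h
  push_neg at h
  set M := Finset.univ.inf' ⟨⟨0, hn⟩, Finset.mem_univ _⟩ m with hM
  obtain ⟨j, -, hj⟩ := Finset.exists_mem_eq_inf' (⟨⟨0, hn⟩, Finset.mem_univ _⟩ :
    (Finset.univ : Finset (Fin n)).Nonempty) m
  have hlt : ∀ i, M < dstar i := fun i =>
    lt_of_le_of_ne (le_trans (Finset.inf'_le _ (Finset.mem_univ i)) (hfeas.2 i))
      (Ne.symm (h i))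
  set d := Function.update dstar j M with hd
  have hdj : d j = M := Function.update_self _ _ _
  have hdne : ∀ i, i ≠ j → d i = dstar i := fun i hi => Function.update_of_ne hi _ _
  have hdinj : Function.Injective d := by
    intro x y hxy
    by_cases hx : x = j <;> by_cases hy : y = j
    · rw [hx, hy]
    · rw [hx, hdj, hdne y hy] at hxy
      exact absurd hxy.symm (ne_of_gt (hlt y))
    · rw [hy, hdj, hdne x hx] at hxy
      exact absurd hxy (ne_of_gt (hlt x))
    · exact hfeas.1 (by rwa [hdne x hx, hdne y hy] at hxy)
  have hdle : ∀ i, m i ≤ d i := by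
    intro i
    by_cases hi : i = j
    · rw [hi, hdj, hM, hj]
    · rw [hdne i hi]; exact hfeas.2 i
  have key := hmin d hdinj hdle
  have h1 : ∑ i, a i * d i < ∑ i, a i * dstar i := by
    rw [← Finset.add_sum_erase _ (fun i => a i * d i) (Finset.mem_univ j),
        ← Finset.add_sum_erase _ (fun i => a i * dstar i) (Finset.mem_univ j)]
    have he : ∑ i ∈ Finset.univ.erase j, a i * d i
        = ∑ i ∈ Finset.univ.erase j, a i * dstar i :=
      Finset.sum_congr rfl fun i hi => by rw [hdne i (Finset.ne_of_mem_erase hi)]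
    rw [he, hdj]
    exact add_lt_add_of_lt_of_le (mul_lt_mul_of_pos_left (hlt j) (ha j)) le_rfl
  omega
end

section
/- Soundness of the improved filtering (simple case, Theorem 3.3): let c : ℤ, let μ be the attained minimum of e over feasible assignments, and for each index i let μ_i be the attained minimum of e_i over i-feasible assignments. Then: (i) if c < μ, there is no feasible assignment d with e(d) ≤ c; (ii) for every index i, every feasible assignment d with e(d) ≤ c satisfies a i * d i ≤ c − μ_i, and hence d i ≤ (c − μ_i) / a i, where / denotes integer floor division (Int.fdiv). -/
/-- Soundness of the improved filtering (simple case, Theorem 3.3). -/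
theorem stmt_5 (n : ℕ) (a m : Fin n → ℤ) (ha : ∀ i, 0 < a i) (c : ℤ)
    (μ : ℤ)
    (hμ_lb : ∀ d : Fin n → ℤ, Function.Injective d → (∀ i, m i ≤ d i) →
      μ ≤ ∑ i, a i * d i)
    (hμ_att : ∃ d : Fin n → ℤ, (Function.Injective d ∧ ∀ i, m i ≤ d i) ∧
      ∑ i, a i * d i = μ)
    (μi : Fin n → ℤ)
    (hμi_lb : ∀ i : Fin n, ∀ d' : Fin n → ℤ, Set.InjOn d' {j | j ≠ i} →
      (∀ j, j ≠ i → m j ≤ d' j) → μi i ≤ ∑ j ∈ Finset.univ.erase i, a j * d' j)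
    (hμi_att : ∀ i : Fin n, ∃ d' : Fin n → ℤ, (Set.InjOn d' {j | j ≠ i} ∧
      ∀ j, j ≠ i → m j ≤ d' j) ∧ ∑ j ∈ Finset.univ.erase i, a j * d' j = μi i) :
    (c < μ → ¬ ∃ d : Fin n → ℤ, (Function.Injective d ∧ ∀ i, m i ≤ d i) ∧
      ∑ i, a i * d i ≤ c) ∧
    (∀ i : Fin n, ∀ d : Fin n → ℤ, Function.Injective d → (∀ j, m j ≤ d j) →
      ∑ j, a j * d j ≤ c →
      a i * d i ≤ c - μi i ∧ d i ≤ (c - μi i).fdiv (a i)) := by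
  constructor
  · intro hc ⟨d, ⟨hinj, hm⟩, hle⟩
    exact absurd (le_trans (hμ_lb d hinj hm) hle) (not_le.mpr hc)
  · intro i d hinj hm hle
    have hsplit : ∑ j, a j * d j = a i * d i + ∑ j ∈ Finset.univ.erase i, a j * d j := by
      rw [← Finset.add_sum_erase _ _ (Finset.mem_univ i)]
    have hki : μi i ≤ ∑ j ∈ Finset.univ.erase i, a j * d j :=
      hμi_lb i d (fun x _ y _ h => hinj h) (fun j _ => hm j)
    have h1 : a i * d i ≤ c - μi i := by omega
    refine ⟨h1, ?_⟩
    rw [Int.fdiv_eq_ediv_of_nonneg _ (le_of_lt (ha i))]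
    rw [Int.le_ediv_iff_mul_le (ha i)]
    linarith [h1]
end

section
/- Correction transfer inequality (toward Theorem 3.2): let i and l be distinct indices, let μ_i be the attained minimum of e_i over i-feasible assignments, and let d' be any l-feasible assignment with m l ≤ d' i. Then the assignment obtained from d' by setting the value at index l to d' i (and leaving all indices other than i and l unchanged) is i-feasible, and consequently μ_i ≤ e_l(d') + (a l − a i) * d' i. -/
/-- Correction transfer inequality (toward Theorem 3.2): moving the value of index
`i` to index `l` in an `l`-feasible assignment yields an `i`-feasible assignment,
hence `μ_i ≤ e_l(d') + (a l − a i) * d' i`. -/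
theorem stmt_7 (n : ℕ) (a m : Fin n → ℤ) (ha : ∀ i, 0 < a i)
    (i l : Fin n) (hil : i ≠ l)
    (μi : ℤ)
    (hμi_lb : ∀ d' : Fin n → ℤ, Set.InjOn d' {j | j ≠ i} →
      (∀ j, j ≠ i → m j ≤ d' j) → μi ≤ ∑ j ∈ Finset.univ.erase i, a j * d' j)
    (hμi_att : ∃ d' : Fin n → ℤ, (Set.InjOn d' {j | j ≠ i} ∧
      ∀ j, j ≠ i → m j ≤ d' j) ∧ ∑ j ∈ Finset.univ.erase i, a j * d' j = μi)
    (d' : Fin n → ℤ)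
    (hd' : Set.InjOn d' {j | j ≠ l} ∧ ∀ j, j ≠ l → m j ≤ d' j)
    (hml : m l ≤ d' i) :
    (Set.InjOn (Function.update d' l (d' i)) {j | j ≠ i} ∧
      ∀ j, j ≠ i → m j ≤ Function.update d' l (d' i) j) ∧
    μi ≤ (∑ j ∈ Finset.univ.erase l, a j * d' j) + (a l - a i) * d' i := by
  obtain ⟨hinj, hlb⟩ := hd'
  set u := Function.update d' l (d' i) with hu
  have huval : ∀ j, j ≠ l → u j = d' j := by
    intro j hj; simp [hu, Function.update_of_ne hj]
  have hul : u l = d' i := by simp [hu]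
  have hfeas1 : Set.InjOn u {j | j ≠ i} := by
    intro x hx y hy hxy
    simp only [Set.mem_setOf_eq] at hx hy
    by_cases hxl : x = l
    · by_cases hyl : y = l
      · rw [hxl, hyl]
      · rw [hxl, hul, huval y hyl] at hxy
        exact absurd (hinj (by simpa using hil) (by simpa using hyl) hxy).symm hy
    · by_cases hyl : y = l
      · rw [hyl, hul, huval x hxl] at hxy
        exact absurd (hinj (by simpa using hxl) (by simpa using hil) hxy) hx
      · exact hinj (by simpa using hxl) (by simpa using hyl) (by rwa [huval x hxl, huval y hyl] at hxy)
  have hfeas2 : ∀ j, j ≠ i → m j ≤ u j := by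
    intro j hj
    by_cases hjl : j = l
    · rw [hjl, hul]; exact hml
    · rw [huval j hjl]; exact hlb j hjl
  refine ⟨⟨hfeas1, hfeas2⟩, ?_⟩
  have key := hμi_lb u hfeas1 hfeas2
  have hsum : ∑ j ∈ Finset.univ.erase i, a j * u j
      = (∑ j ∈ Finset.univ.erase l, a j * d' j) + (a l - a i) * d' i := by
    have hli : l ∈ Finset.univ.erase i := by simp [Ne.symm hil]
    have hil' : i ∈ Finset.univ.erase l := by simp [hil]
    rw [← Finset.add_sum_erase _ _ hli, ← Finset.add_sum_erase _ _ hil']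
    have hcomm : (Finset.univ.erase i).erase l = (Finset.univ.erase l).erase i :=
      Finset.erase_right_comm
    have hrest : ∑ j ∈ (Finset.univ.erase i).erase l, a j * u j
        = ∑ j ∈ (Finset.univ.erase l).erase i, a j * d' j := by
      rw [hcomm]
      refine Finset.sum_congr rfl fun j hj => ?_
      have hjl : j ≠ l := by
        rw [← hcomm] at hj
        exact Finset.ne_of_mem_erase hj
      rw [huval j hjl]
    rw [hrest, hul]
    ring
  rw [hsum] at key
  exact key
end

section
/- The up-feasible set is nonempty (for example, the assignment d i = h − i, where h is a lower bound of all the values M i, is up-feasible); moreover, for every up-feasible assignment d one has e(d) ≤ ∑ i, a i * M i, and there exists an up-feasible assignment d* such that e(d) ≤ e(d*) for every up-feasible assignment d (i.e., the objective e attains a maximum on the up-feasible set). -/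
/-- The up-feasible set is nonempty, `∑ i, a i * M i` is an upper bound of the
objective on it, and the objective attains a maximum on it. -/
theorem stmt_8 (n : ℕ) (a M : Fin n → ℤ) (ha : ∀ i, 0 < a i) :
    (∃ d : Fin n → ℤ, Function.Injective d ∧ ∀ i, d i ≤ M i) ∧
    (∀ d : Fin n → ℤ, Function.Injective d → (∀ i, d i ≤ M i) →
      ∑ i, a i * d i ≤ ∑ i, a i * M i) ∧
    (∃ dstar : Fin n → ℤ, (Function.Injective dstar ∧ ∀ i, dstar i ≤ M i) ∧
      ∀ d : Fin n → ℤ, Function.Injective d → (∀ i, d i ≤ M i) →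
        ∑ i, a i * d i ≤ ∑ i, a i * dstar i) := by
  obtain ⟨h, hh⟩ := (Set.finite_range M).bddBelow
  have hhM : ∀ i, h ≤ M i := fun i => hh ⟨i, rfl⟩
  have hne : ∃ d : Fin n → ℤ, Function.Injective d ∧ ∀ i, d i ≤ M i := by
    refine ⟨fun i => h - (i : ℤ), ?_, ?_⟩
    · intro i j hij
      have : ((i : ℕ) : ℤ) = ((j : ℕ) : ℤ) := sub_right_injective hij
      exact Fin.ext (Nat.cast_injective this)
    · intro i
      simp only
      have h0 : (0 : ℤ) ≤ ((i : ℕ) : ℤ) := Int.ofNat_nonneg _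
      linarith [hhM i]
  have hub : ∀ d : Fin n → ℤ, Function.Injective d → (∀ i, d i ≤ M i) →
      ∑ i, a i * d i ≤ ∑ i, a i * M i := by
    intro d _ hd
    exact Finset.sum_le_sum fun i _ =>
      mul_le_mul_of_nonneg_left (hd i) (ha i).le
  refine ⟨hne, hub, ?_⟩
  have := Int.exists_greatest_of_bdd (P := fun z =>
      ∃ d : Fin n → ℤ, (Function.Injective d ∧ ∀ i, d i ≤ M i) ∧ ∑ i, a i * d i = z)
    ⟨∑ i, a i * M i, fun z ⟨d, ⟨hdi, hdM⟩, hz⟩ => hz ▸ hub d hdi hdM⟩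
    ⟨_, hne.choose, ⟨hne.choose_spec.1, hne.choose_spec.2⟩, rfl⟩
  obtain ⟨z, ⟨dstar, hds, hzeq⟩, hmax⟩ := this
  refine ⟨dstar, hds, fun d hdi hdM => ?_⟩
  rw [hzeq]
  exact hmax _ ⟨d, ⟨hdi, hdM⟩, rfl⟩
end

section
/- Exchange property of maximizers: if d* is a maximizer, i and j are distinct indices with a j < a i, and d* j ≤ M i, then d* j < d* i (in a maximizing assignment, among two variables that are both eligible for the larger of their two values, the variable with the greater coefficient must receive the larger value). -/
/-- Exchange property of maximizers: if `a j < a i` and `d* j ≤ M i`, then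
`d* j < d* i`. -/
theorem stmt_9 (n : ℕ) (a M : Fin n → ℤ) (ha : ∀ i, 0 < a i)
    (dstar : Fin n → ℤ)
    (hfeas : Function.Injective dstar ∧ ∀ i, dstar i ≤ M i)
    (hmax : ∀ d : Fin n → ℤ, Function.Injective d → (∀ i, d i ≤ M i) →
      ∑ i, a i * d i ≤ ∑ i, a i * dstar i)
    (i j : Fin n) (hij : i ≠ j) (hcoef : a j < a i) (helig : dstar j ≤ M i) :
    dstar j < dstar i := by
  obtain ⟨hinj, hub⟩ := hfeas
  by_contra h
  push_neg at h
  have hne : dstar i ≠ dstar j := fun e => hij (hinj e)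
  have hlt : dstar i < dstar j := lt_of_le_of_ne h hne
  set d : Fin n → ℤ := dstar ∘ Equiv.swap i j with hd
  have hdinj : Function.Injective d := hinj.comp (Equiv.swap i j).injective
  have hdi : d i = dstar j := by simp [hd]
  have hdj : d j = dstar i := by simp [hd]
  have hdk : ∀ k, k ≠ i → k ≠ j → d k = dstar k := by
    intro k hki hkj
    simp [hd, Equiv.swap_apply_of_ne_of_ne hki hkj]
  have hbd : ∀ k, d k ≤ M k := by
    intro k
    by_cases hki : k = i
    · subst hki; rw [hdi]; exact helig
    · by_cases hkj : k = j
      · subst hkj; rw [hdj]; exact le_trans hlt.le (hub _)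
      · rw [hdk k hki hkj]; exact hub k
  have hle := hmax d hdinj hbd
  have hsum : ∑ k, (a k * d k - a k * dstar k)
      = (a i * d i - a i * dstar i) + (a j * d j - a j * dstar j) := by
    rw [← Finset.sum_subset (Finset.subset_univ ({i, j} : Finset (Fin n)))
      (by
        intro k _ hk
        simp only [Finset.mem_insert, Finset.mem_singleton, not_or] at hk
        rw [hdk k hk.1 hk.2]; ring)]
    rw [Finset.sum_pair hij]
  rw [Finset.sum_sub_distrib] at hsum
  have : (a i * d i - a i * dstar i) + (a j * d j - a j * dstar j) ≤ 0 := by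
    omega
  rw [hdi, hdj] at this
  nlinarith [hlt, hcoef]
end

section
/- No-gap property of maximizers: if d* is a maximizer, then for every index i and every integer v with d* i < v ≤ M i there exists an index j with d* j = v (no variable of a maximizing assignment can be raised to an unused value below its maximum). -/
/-- No-gap property of maximizers: every value `v` with `d* i < v ≤ M i` is used
by some variable. -/
theorem stmt_10 (n : ℕ) (a M : Fin n → ℤ) (ha : ∀ i, 0 < a i)
    (dstar : Fin n → ℤ)
    (hfeas : Function.Injective dstar ∧ ∀ i, dstar i ≤ M i)
    (hmax : ∀ d : Fin n → ℤ, Function.Injective d → (∀ i, d i ≤ M i) →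
      ∑ i, a i * d i ≤ ∑ i, a i * dstar i) :
    ∀ i : Fin n, ∀ v : ℤ, dstar i < v → v ≤ M i → ∃ j : Fin n, dstar j = v := by
  intro i v hlt hle
  by_contra hno
  push_neg at hno
  obtain ⟨hinj, hM⟩ := hfeas
  set d := Function.update dstar i v with hd
  have hdinj : Function.Injective d := by
    intro x y hxy
    by_cases hx : x = i <;> by_cases hy : y = i
    · rw [hx, hy]
    · exfalso
      simp only [hd, hx, Function.update_self, Function.update_of_ne hy] at hxy
      exact hno y hxy.symm
    · exfalso
      simp only [hd, hy, Function.update_self, Function.update_of_ne hx] at hxy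
      exact hno x hxy
    · simp only [hd, Function.update_of_ne hx, Function.update_of_ne hy] at hxy
      exact hinj hxy
  have hdM : ∀ k, d k ≤ M k := by
    intro k
    by_cases hk : k = i
    · simp [hd, hk, hle]
    · simp [hd, Function.update_of_ne hk, hM k]
  have hsum := hmax d hdinj hdM
  have hdiff : ∑ k, a k * d k - ∑ k, a k * dstar k = a i * (v - dstar i) := by
    rw [← Finset.sum_sub_distrib]
    rw [Finset.sum_eq_single i]
    · simp [hd, mul_sub]
    · intro b _ hb
      simp [hd, Function.update_of_ne hb]
    · simp
  have hpos : 0 < a i * (v - dstar i) :=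
    mul_pos (ha i) (by omega)
  omega
end

section
/- Soundness of the improved filtering for lower-bounded sums (the e ≥ c case): let c : ℤ, let ν be the attained maximum of e over up-feasible assignments, and for each index i let ν_i be the attained maximum of e_i over i-up-feasible assignments. Then: (i) if ν < c, there is no up-feasible assignment d with c ≤ e(d); (ii) for every index i, every up-feasible assignment d with c ≤ e(d) satisfies c − ν_i ≤ a i * d i. -/
/-- Soundness of the improved filtering for lower-bounded sums (the `e ≥ c` case). -/
theorem stmt_11 (n : ℕ) (a M : Fin n → ℤ) (ha : ∀ i, 0 < a i) (c : ℤ)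
    (ν : ℤ)
    (hν_ub : ∀ d : Fin n → ℤ, Function.Injective d → (∀ i, d i ≤ M i) →
      ∑ i, a i * d i ≤ ν)
    (hν_att : ∃ d : Fin n → ℤ, (Function.Injective d ∧ ∀ i, d i ≤ M i) ∧
      ∑ i, a i * d i = ν)
    (νi : Fin n → ℤ)
    (hνi_ub : ∀ i : Fin n, ∀ d' : Fin n → ℤ, Set.InjOn d' {j | j ≠ i} →
      (∀ j, j ≠ i → d' j ≤ M j) → ∑ j ∈ Finset.univ.erase i, a j * d' j ≤ νi i)
    (hνi_att : ∀ i : Fin n, ∃ d' : Fin n → ℤ, (Set.InjOn d' {j | j ≠ i} ∧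
      ∀ j, j ≠ i → d' j ≤ M j) ∧ ∑ j ∈ Finset.univ.erase i, a j * d' j = νi i) :
    (ν < c → ¬ ∃ d : Fin n → ℤ, (Function.Injective d ∧ ∀ i, d i ≤ M i) ∧
      c ≤ ∑ i, a i * d i) ∧
    (∀ i : Fin n, ∀ d : Fin n → ℤ, Function.Injective d → (∀ j, d j ≤ M j) →
      c ≤ ∑ j, a j * d j → c - νi i ≤ a i * d i) := by
  constructor
  · rintro hlt ⟨d, ⟨hinj, hle⟩, hc⟩
    exact absurd (hc.trans (hν_ub d hinj hle)) (not_le.mpr hlt)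
  · intro i d hinj hle hc
    have hsplit : ∑ j, a j * d j = a i * d i + ∑ j ∈ Finset.univ.erase i, a j * d j :=
      (Finset.add_sum_erase _ _ (Finset.mem_univ i)).symm
    have hub : ∑ j ∈ Finset.univ.erase i, a j * d j ≤ νi i :=
      hνi_ub i d (fun x _ y _ h => hinj h) (fun j _ => hle j)
    omega
end
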